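/- Let d = g ⊕ g* be the double of an n-Lie bialgebra with the bracket [x_1+ξ_1,...,x_n+ξ_n]_d = [x_1,...,x_n] + Σ_i (−1)^{n−i} ad*_{x̂_i}ξ_i + [ξ_1,...,ξ_n]_{g*} + Σ_i (−1)^{n−i} Ad*_{ξ̂_i}x_i, and let ⟨x+ξ, y+η⟩_d = ⟨η,x⟩ + ⟨ξ,y⟩. Then the bilinear form ⟨·,·⟩_d is invariant: ⟨[u_1,...,u_n]_d, t⟩_d + ⟨u_n, [u_1,...,u_{n-1},t]_d⟩_d = 0 for all u_1,...,u_n, t ∈ d. -/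
import Mathlib


open scoped TensorProduct

noncomputable section

variable {K V : Type*} [Field K] [CharZero K] [AddCommGroup V] [Module K V]

/-- `ad_{x₁,…,x_{n-1}} : V → V`, `y ↦ [x₁,…,x_{n-1},y]`. -/
def adMap {m : ℕ} (b : MultilinearMap K (fun _ : Fin (m + 1) => V) V)
    (X : Fin m → V) : V →ₗ[K] V := b.curryRight X

/-- The coadjoint action `ad*`: `⟨ad*_X ξ, x⟩ = −⟨ξ, [X, x]⟩`. -/
def coad {m : ℕ} (b : MultilinearMap K (fun _ : Fin (m + 1) => V) V)
    (X : Fin m → V) : Module.Dual K V →ₗ[K] Module.Dual K V := -(adMap b X).dualMap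

/-- `1^{⊗(i-1)} ⊗ f ⊗ 1^{⊗(n-i)}` acting on `⊗ⁿ V` (position `i`, `0`-indexed). -/
def tmap {n : ℕ} (i : Fin n) (f : V →ₗ[K] V) :
    (⨂[K] _ : Fin n, V) →ₗ[K] (⨂[K] _ : Fin n, V) :=
  PiTensorProduct.map (Function.update (fun _ => LinearMap.id) i f)

/-- Pairing of `⊗ⁿ V` with an `n`-tuple of functionals. -/
def pairV {n : ℕ} (ξ : Fin n → Module.Dual K V) : (⨂[K] _ : Fin n, V) →ₗ[K] K :=
  PiTensorProduct.lift ((MultilinearMap.mkPiAlgebra K (Fin n) K).compLinearMap ξ)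

/-- `z ↦ [z, y₁,…,y_{n-1}]`, the bracket acting in the first slot. -/
def firstSlot {m : ℕ} (b : MultilinearMap K (fun _ : Fin (m + 1) => V) V)
    (y : Fin m → V) : V →ₗ[K] V where
  toFun z := b.curryLeft z y
  map_add' z z' := by simp only [map_add, MultilinearMap.add_apply]
  map_smul' r z := by simp only [map_smul, MultilinearMap.smul_apply, RingHom.id_apply]

/-- The bracket on the double `d = g ⊕ g*`:
`[x₁+ξ₁,…,xₙ+ξₙ] = [x₁,…,xₙ] + Σᵢ (−1)^{n−i} Ad*_{ξ̂ᵢ} xᵢ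
 + [ξ₁,…,ξₙ]_{g*} + Σᵢ (−1)^{n−i} ad*_{x̂ᵢ} ξᵢ`. -/
def doubleBracket {m : ℕ} (b : MultilinearMap K (fun _ : Fin (m + 1) => V) V)
    (c : MultilinearMap K (fun _ : Fin (m + 1) => Module.Dual K V) (Module.Dual K V))
    (Coad : (Fin m → Module.Dual K V) → V →ₗ[K] V)
    (u : Fin (m + 1) → V × Module.Dual K V) : V × Module.Dual K V :=
  (b (fun i => (u i).1) + ∑ i : Fin (m + 1), ((-1 : K) ^ (m - (i : ℕ))) •
      Coad (fun j => (u (i.succAbove j)).2) ((u i).1),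
   c (fun i => (u i).2) + ∑ i : Fin (m + 1), ((-1 : K) ^ (m - (i : ℕ))) •
      coad b (fun j => (u (i.succAbove j)).1) ((u i).2))

/-- The canonical bilinear form on the double `d = g ⊕ g*`:
`⟨x+ξ, y+η⟩ = ⟨η,x⟩ + ⟨ξ,y⟩`. -/
def doubleForm (u v : V × Module.Dual K V) : K := v.2 u.1 + u.2 v.1

section helpers
variable {W W₂ : Type*} [AddCommGroup W] [Module K W] [AddCommGroup W₂] [Module K W₂]
set_option linter.unusedSectionVars false

lemma succAbove_castSucc_last' {m : ℕ} (j : Fin (m + 1)) :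
    (j.castSucc).succAbove (Fin.last m) = Fin.last (m + 1) := by
  rw [Fin.succAbove_of_le_castSucc]
  · exact Fin.succ_last m
  · simp [Fin.le_def]; omega

lemma snoc_swap' {m : ℕ}
    (b : MultilinearMap K (fun _ : Fin (m + 2) => W) W₂)
    (halt : ∀ (v : Fin (m + 2) → W) (i j : Fin (m + 2)), i ≠ j → v i = v j → b v = 0)
    (Y : Fin (m + 1) → W) (z : W) :
    b (Fin.snoc Y z) =
      - b (Fin.snoc (Function.update Y (Fin.last m) z) (Y (Fin.last m))) := by
  let A : W [⋀^Fin (m + 2)]→ₗ[K] W₂ :=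
    { toMultilinearMap := b, map_eq_zero_of_eq' := fun v i j h hne => halt v i j hne h }
  have hne : (Fin.castSucc (Fin.last m)) ≠ Fin.last (m + 1) := by
    simp [Fin.ext_iff]
  have := A.map_swap (Fin.snoc Y z) hne
  have heq : (Fin.snoc Y z : Fin (m+2) → W) ∘ Equiv.swap (Fin.castSucc (Fin.last m)) (Fin.last (m + 1))
      = Fin.snoc (Function.update Y (Fin.last m) z) (Y (Fin.last m)) := by
    funext p
    rcases eq_or_ne p (Fin.last (m+1)) with rfl | hp
    · simp [Equiv.swap_apply_right, Fin.snoc_castSucc]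
    · obtain ⟨r, rfl⟩ := Fin.exists_castSucc_eq.2 hp
      rcases eq_or_ne r (Fin.last m) with rfl | hr
      · simp [Equiv.swap_apply_left, Fin.snoc_last]
      · have h1 : Equiv.swap (Fin.castSucc (Fin.last m)) (Fin.last (m + 1)) (Fin.castSucc r) = Fin.castSucc r := by
          apply Equiv.swap_apply_of_ne_of_ne
          · simpa [Fin.ext_iff] using fun h => hr (Fin.ext h)
          · simp [Fin.ext_iff]; omega
        simp [h1, Fin.snoc_castSucc, Function.update_of_ne hr]
  rw [heq] at this
  rw [show b (Fin.snoc (Function.update Y (Fin.last m) z) (Y (Fin.last m))) = A (Fin.snoc (Function.update Y (Fin.last m) z) (Y (Fin.last m))) from rfl, this]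
  simp [A]

lemma key_update' {m : ℕ} (x : Fin (m + 2) → W) (z : W) (j : Fin (m + 1)) :
    (fun k => (Fin.snoc (fun i : Fin (m + 1) => x i.castSucc) z : Fin (m + 2) → W)
        ((j.castSucc).succAbove k))
      = Function.update (fun k => x ((j.castSucc).succAbove k)) (Fin.last m) z := by
  funext k
  rcases eq_or_ne k (Fin.last m) with rfl | hk
  · simp [succAbove_castSucc_last', Fin.snoc_last]
  · have h1 : (j.castSucc).succAbove k ≠ Fin.last (m + 1) := by
      rw [← succAbove_castSucc_last' j]; exact fun h => hk (Fin.succAbove_right_injective h)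
    obtain ⟨r, hr⟩ := Fin.exists_castSucc_eq.2 h1
    simp [Function.update_of_ne hk, ← hr, Fin.snoc_castSucc]

lemma cancel_lemma' {m : ℕ}
    (b : MultilinearMap K (fun _ : Fin (m + 2) => W) W₂)
    (halt : ∀ (v : Fin (m + 2) → W) (i j : Fin (m + 2)), i ≠ j → v i = v j → b v = 0)
    (x : Fin (m + 2) → W) (z : W) (j : Fin (m + 1)) :
    b (Fin.snoc (fun k => (Fin.snoc (fun i : Fin (m + 1) => x i.castSucc) z : Fin (m + 2) → W)
        ((j.castSucc).succAbove k)) (x (Fin.last (m + 1))))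
      = - b (Fin.snoc (fun k => x ((j.castSucc).succAbove k)) z) := by
  rw [snoc_swap' b halt (fun k => x ((j.castSucc).succAbove k)) z, neg_neg]
  rw [key_update', succAbove_castSucc_last']

end helpers

/-- On the double `d = g ⊕ g*` of a double construction `n`-Lie bialgebra
(`n = q+2`), the canonical bilinear form `⟨x+ξ, y+η⟩ = ⟨η,x⟩ + ⟨ξ,y⟩` is
invariant: `⟨[u₁,…,uₙ], t⟩ + ⟨uₙ, [u₁,…,u_{n-1}, t]⟩ = 0`. -/
theorem double_form_invariant {q : ℕ} [FiniteDimensional K V]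
    (b : MultilinearMap K (fun _ : Fin (q + 2) => V) V)
    (halt : ∀ (v : Fin (q + 2) → V) (i j : Fin (q + 2)), i ≠ j → v i = v j → b v = 0)
    (hFJ : ∀ (x : Fin (q + 1) → V) (y : Fin (q + 2) → V),
      b (Fin.snoc x (b y)) = ∑ i, b (Function.update y i (b (Fin.snoc x (y i)))))
    (c : MultilinearMap K (fun _ : Fin (q + 2) => Module.Dual K V) (Module.Dual K V))
    (caltern : ∀ (ξ : Fin (q + 2) → Module.Dual K V) (i j : Fin (q + 2)),
      i ≠ j → ξ i = ξ j → c ξ = 0)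
    (cFJ : ∀ (ξ : Fin (q + 1) → Module.Dual K V) (η : Fin (q + 2) → Module.Dual K V),
      c (Fin.snoc ξ (c η)) = ∑ i, c (Function.update η i (c (Fin.snoc ξ (η i)))))
    (γ : V →ₗ[K] ⨂[K] _ : Fin (q + 2), V)
    (hcompat : ∀ (ξ : Fin (q + 2) → Module.Dual K V) (x : V), c ξ x = pairV ξ (γ x))
    (Coad : (Fin (q + 1) → Module.Dual K V) → V →ₗ[K] V)
    (hCoad : ∀ (Ξ : Fin (q + 1) → Module.Dual K V) (x : V) (η : Module.Dual K V),
      η (Coad Ξ x) = -(c (Fin.snoc Ξ η)) x)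
    (hR1 : ∀ x : Fin (q + 2) → V,
      γ (b x) = ∑ i : Fin (q + 2), ((-1 : K) ^ (q + 1 - (i : ℕ))) •
        tmap 0 (adMap b (x ∘ i.succAbove)) (γ (x i)))
    (hcentroid : ∀ x : Fin (q + 2) → V,
      γ (b x) = tmap 0 (firstSlot b (fun j => x j.succ)) (γ (x 0)))
    (hloc1 : ∀ (z : V) (Y : Fin (q + 1) → V) (j : Fin (q + 1)),
      tmap (j.castSucc) (adMap b Y) (γ z) + tmap (Fin.last (q + 1)) (adMap b Y) (γ z) = 0)
    (hloc2 : ∀ (y : Fin q → V) (z w : V) (i k : Fin (q + 2)), i ≠ k →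
      tmap i (adMap b (Fin.snoc y w)) (γ z) + tmap k (adMap b (Fin.snoc y z)) (γ w) = 0) :
    ∀ (u : Fin (q + 2) → V × Module.Dual K V) (t : V × Module.Dual K V),
      doubleForm (doubleBracket b c Coad u) t +
        doubleForm (u (Fin.last (q + 1)))
          (doubleBracket b c Coad (Fin.snoc (fun i : Fin (q + 1) => u i.castSucc) t)) = 0 := by
  intro u t
  have h1 : ∀ p : Fin (q + 2),
      ((Fin.snoc (fun i : Fin (q + 1) => u i.castSucc) t : Fin (q+2) → _) p).1
        = (Fin.snoc (fun i : Fin (q + 1) => (u i.castSucc).1) t.1 : Fin (q+2) → V) p := by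
    intro p
    induction p using Fin.lastCases <;> simp
  have h2 : ∀ p : Fin (q + 2),
      ((Fin.snoc (fun i : Fin (q + 1) => u i.castSucc) t : Fin (q+2) → _) p).2
        = (Fin.snoc (fun i : Fin (q + 1) => (u i.castSucc).2) t.2 : Fin (q+2) → Module.Dual K V) p := by
    intro p
    induction p using Fin.lastCases <;> simp
  have hxx : (Fin.snoc (fun i : Fin (q + 1) => (u i.castSucc).1) ((u (Fin.last (q+1))).1)
      : Fin (q+2) → V) = fun i => (u i).1 := by
    funext p; induction p using Fin.lastCases <;> simp
  have hξξ : (Fin.snoc (fun i : Fin (q + 1) => (u i.castSucc).2) ((u (Fin.last (q+1))).2)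
      : Fin (q+2) → Module.Dual K V) = fun i => (u i).2 := by
    funext p; induction p using Fin.lastCases <;> simp
  have hb : ∀ j : Fin (q + 1),
      b (Fin.snoc (fun k => (Fin.snoc (fun i : Fin (q + 1) => (u i.castSucc).1) t.1
          : Fin (q+2) → V) ((j.castSucc).succAbove k)) ((u (Fin.last (q + 1))).1))
        = - b (Fin.snoc (fun k => (u ((j.castSucc).succAbove k)).1) t.1) :=
    fun j => cancel_lemma' b halt (fun p => (u p).1) t.1 j
  have hc : ∀ j : Fin (q + 1),
      c (Fin.snoc (fun k => (Fin.snoc (fun i : Fin (q + 1) => (u i.castSucc).2) t.2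
          : Fin (q+2) → Module.Dual K V) ((j.castSucc).succAbove k)) ((u (Fin.last (q + 1))).2))
        = - c (Fin.snoc (fun k => (u ((j.castSucc).succAbove k)).2) t.2) :=
    fun j => cancel_lemma' c caltern (fun p => (u p).2) t.2 j
  simp only [doubleForm, doubleBracket, coad, adMap, map_add, map_sum, map_smul,
    LinearMap.add_apply, LinearMap.sum_apply, LinearMap.smul_apply, LinearMap.neg_apply,
    LinearMap.dualMap_apply, smul_eq_mul, hCoad, MultilinearMap.curryRight_apply, h1, h2]
  have hq : q + 1 - q = 1 := by omega
  simp only [Fin.sum_univ_castSucc, Fin.succAbove_last, Fin.snoc_castSucc, Fin.snoc_last,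
    Fin.coe_castSucc, Fin.val_last, Nat.sub_self, pow_zero, one_mul, hb, hc, map_neg,
    LinearMap.neg_apply, neg_neg, hxx, hξξ, hq, pow_one, mul_neg, neg_mul,
    Finset.sum_neg_distrib]
  ring
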